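/- Let X be a subshift of Q^M with ρ-bounded propagation. Then X is ρ-strongly irreducible and ρ-step. -/

import Mathlib

open Filter Set

namespace GoE

variable {G M Q : Type*}

/-- A left homogeneous space `⟨M, G, ▷⟩` together with a coordinate system
`⟨m₀, (g_{m₀,m})_{m∈M}⟩`: a cell space with finite stabiliser `G₀` of `m₀`. -/
structure CellSpace (G M : Type*) [Group G] where
  act : G → M → M
  one_act : ∀ m : M, act 1 m = m
  mul_act : ∀ (g h : G) (m : M), act (g * h) m = act g (act h m)
  transitive : ∀ m m' : M, ∃ g : G, act g m = m'
  m0 : M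
  coord : M → G
  coord_act : ∀ m : M, act (coord m) m0 = m
  stab_finite : {g : G | act g m0 = m0}.Finite

variable [Group G]

namespace CellSpace

/-- Membership in the stabiliser `G₀` of `m₀`. -/
def stab (R : CellSpace G M) (g : G) : Prop := R.act g R.m0 = R.m0

/-- The induced right semi-action `m ↝ gG₀ = g_{m₀,m} g ▷ m₀`, on representatives. -/
def sAct (R : CellSpace G M) (m : M) (g : G) : M := R.act (R.coord m * g) R.m0

/-- `m ↝ ι n` where `ι : M → G/G₀`, `n ↦ G_{m₀,n}` is the canonical identification. -/
def nAct (R : CellSpace G M) (m n : M) : M := R.act (R.coord m * R.coord n) R.m0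

/-- `S ⊆ G` represents a finite symmetric right generating set of cosets
(`G₀ · S ⊆ S`, `S⁻¹ ⊆ S`, and `S` generates). -/
structure IsRightGenSet (R : CellSpace G M) (S : Set G) : Prop where
  finite : S.Finite
  saturated : ∀ s ∈ S, ∀ g₀ : G, R.stab g₀ → s * g₀ ∈ S
  stab_mul : ∀ g₀ : G, R.stab g₀ → ∀ s ∈ S, g₀ * s ∈ S
  symm : ∀ s ∈ S, s⁻¹ ∈ S
  generates : ∀ m : M, ∃ (k : ℕ) (f : ℕ → M), f 0 = R.m0 ∧ f k = m ∧
    ∀ i < k, ∃ s ∈ S, f (i + 1) = R.sAct (f i) s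

/-- There is an `S`-path of length `n` from `m` to `m'` in the `S`-Cayley graph. -/
def Chain (R : CellSpace G M) (S : Set G) (m m' : M) (n : ℕ) : Prop :=
  ∃ f : ℕ → M, f 0 = m ∧ f n = m' ∧ ∀ i < n, ∃ s ∈ S, f (i + 1) = R.sAct (f i) s

/-- The `S`-metric `d`. -/
noncomputable def dist (R : CellSpace G M) (S : Set G) (m m' : M) : ℕ :=
  sInf {n : ℕ | R.Chain S m m' n}

/-- The ball `B(m, ρ)` of radius `ρ` centred at `m`. -/
noncomputable def ball (R : CellSpace G M) (S : Set G) (m : M) (ρ : ℕ) : Set M :=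
  {m' : M | R.dist S m m' ≤ ρ}

/-- The `θ`-interior `A^{-θ}` of `A`. -/
noncomputable def inter (R : CellSpace G M) (S : Set G) (A : Set M) (θ : ℕ) : Set M :=
  {m ∈ A | R.ball S m θ ⊆ A}

/-- The `θ`-closure `A^{+θ}` of `A`. -/
noncomputable def clos (R : CellSpace G M) (S : Set G) (A : Set M) (θ : ℕ) : Set M :=
  {m : M | (R.ball S m θ ∩ A).Nonempty}

/-- The external `θ`-boundary `∂θ⁺A = A^{+θ} ∖ A`. -/
noncomputable def extB (R : CellSpace G M) (S : Set G) (A : Set M) (θ : ℕ) : Set M :=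
  R.clos S A θ \ A

/-- The internal `θ`-boundary `∂θ⁻A = A ∖ A^{-θ}`. -/
noncomputable def intB (R : CellSpace G M) (S : Set G) (A : Set M) (θ : ℕ) : Set M :=
  A \ R.inter S A θ

/-- The `θ`-boundary `∂θA = A^{+θ} ∖ A^{-θ}`. -/
noncomputable def bdry (R : CellSpace G M) (S : Set G) (A : Set M) (θ : ℕ) : Set M :=
  R.clos S A θ \ R.inter S A θ

end CellSpace

/-- The set `X_A` of restrictions to `A` of the elements of `X`. -/
def restr (A : Set M) (X : Set (M → Q)) : Set (A → Q) :=
  (fun x : M → Q => A.restrict x) '' X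

/-- The pattern `p` (with domain `A`) semi-occurs in the configuration `c`:
there is `h ∈ H` with `h ⊛ p = c↾_{h ▷ dom p}`. -/
def SemiOccurs (R : CellSpace G M) (H : Subgroup G) {A : Set M} (p : A → Q)
    (c : M → Q) : Prop :=
  ∃ h ∈ H, ∀ a : A, c (R.act h ↑a) = p a

/-- The pattern `p` (with domain `A`) occurs at `t` in the configuration `c`:
`t ⊛' p = c↾_{t ↝ A}`. -/
def OccursAt (R : CellSpace G M) {A : Set M} (p : A → Q) (t : M) (c : M → Q) : Prop :=
  ∀ a : A, c (R.nAct t ↑a) = p a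

/-- The pattern `p` is allowed in `X`: it semi-occurs in some point of `X`. -/
def Allowed (R : CellSpace G M) (H : Subgroup G) (X : Set (M → Q)) {A : Set M}
    (p : A → Q) : Prop :=
  ∃ x ∈ X, SemiOccurs R H p x

/-- The set `⟨𝔉⟩` generated by a set `𝔉` of forbidden patterns. -/
def Generated (R : CellSpace G M) (H : Subgroup G) (𝔉 : Set (Σ A : Set M, A → Q)) :
    Set (M → Q) :=
  {c : M → Q | ∀ f ∈ 𝔉, ¬ SemiOccurs R H f.2 c}

/-- `X` is a subshift of `Q^M`: it is generated by a set of blocks. -/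
def IsSubshift (R : CellSpace G M) (H : Subgroup G) (X : Set (M → Q)) : Prop :=
  ∃ 𝔉 : Set (Σ A : Set M, A → Q), (∀ f ∈ 𝔉, f.1.Finite) ∧ X = Generated R H 𝔉

/-- `X` is a subshift of finite type: it is generated by a finite set of blocks. -/
def IsSubshiftFT (R : CellSpace G M) (H : Subgroup G) (X : Set (M → Q)) : Prop :=
  ∃ 𝔉 : Set (Σ A : Set M, A → Q), 𝔉.Finite ∧ (∀ f ∈ 𝔉, f.1.Finite) ∧
    X = Generated R H 𝔉

/-- `X` is a `κ`-step subshift: it is generated by a set of `B(κ)`-blocks. -/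
def IsStep (R : CellSpace G M) (S : Set G) (H : Subgroup G) (X : Set (M → Q))
    (κ : ℕ) : Prop :=
  ∃ 𝔉 : Set (Σ A : Set M, A → Q), (∀ f ∈ 𝔉, f.1 = R.ball S R.m0 κ) ∧
    X = Generated R H 𝔉

/-- `X` is `κ`-strongly irreducible. -/
def IsStronglyIrr (R : CellSpace G M) (S : Set G) (H : Subgroup G)
    (X : Set (M → Q)) (κ : ℕ) : Prop :=
  ∀ (A B : Set M), A.Finite → B.Finite → ∀ (p : A → Q) (p' : B → Q),
    Allowed R H X p → Allowed R H X p' →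
    (∀ a ∈ A, ∀ b ∈ B, κ + 1 ≤ R.dist S a b) →
    ∃ x ∈ X, A.restrict x = p ∧ B.restrict x = p'

/-- `X` has `ρ`-bounded propagation. -/
def HasBoundedProp (R : CellSpace G M) (S : Set G) (X : Set (M → Q)) (ρ : ℕ) : Prop :=
  ∀ F : Set M, F.Finite → ∀ p : F → Q,
    (∀ f ∈ F, ∃ x ∈ X, ∀ (m : M) (hm : m ∈ R.ball S f ρ ∩ F), p ⟨m, hm.2⟩ = x m) →
    ∃ x ∈ X, F.restrict x = p

/-- `Δ` is a `κ`-local map from `X` to `Y`. -/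
def IsLocalMap (R : CellSpace G M) (S : Set G) (H : Subgroup G)
    (X Y : Set (M → Q)) (Δ : (M → Q) → (M → Q)) (κ : ℕ) : Prop :=
  Set.MapsTo Δ X Y ∧
  ∃ N : Set M, N ⊆ R.ball S R.m0 κ ∧
    (∀ g₀ : G, R.stab g₀ → ∀ n ∈ N, R.act g₀ n ∈ N) ∧
    ∃ δ : (N → Q) → Q,
      (∀ h₀ ∈ H, R.stab h₀ →
        ∀ ℓ ∈ restr N X, ∀ ℓ' : N → Q,
          (∀ (n : M) (hn : n ∈ N) (hn' : R.act h₀⁻¹ n ∈ N),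
            ℓ' ⟨n, hn⟩ = ℓ ⟨R.act h₀⁻¹ n, hn'⟩) →
          δ ℓ' = δ ℓ) ∧
      ∀ x ∈ X, ∀ m : M, Δ x m = δ (fun n : N => x (R.nAct m ↑n))

/-- `Δ` is pre-injective on `X`. -/
def PreInjective (X : Set (M → Q)) (Δ : (M → Q) → (M → Q)) : Prop :=
  ∀ x ∈ X, ∀ x' ∈ X, Δ x = Δ x' → {m : M | x m ≠ x' m}.Finite → x = x'

/-- The cell space `R` is right amenable: there is a finitely additive probability
measure on the power set of `M` that is semi-invariant under the right semi-action. -/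
def RightAmenable (R : CellSpace G M) : Prop :=
  ∃ μ : Set M → ℝ, (∀ A : Set M, 0 ≤ μ A) ∧ μ Set.univ = 1 ∧
    (∀ A B : Set M, Disjoint A B → μ (A ∪ B) = μ A + μ B) ∧
    ∀ (g : G) (A : Set M), Set.InjOn (fun m => R.sAct m g) A →
      μ ((fun m => R.sAct m g) '' A) = μ A

/-- `F` is a right Følner net in `R` (indexed by the directed set `I`). -/
def IsFolnerNet (R : CellSpace G M) (S : Set G) {I : Type*} [Preorder I]
    (F : I → Set M) : Prop :=
  (∀ i, (F i).Nonempty) ∧ (∀ i, (F i).Finite) ∧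
  ∀ ρ : ℕ, Tendsto (fun i => ((R.bdry S (F i) ρ).ncard : ℝ) / ((F i).ncard : ℝ))
    atTop (nhds 0)

/-- The entropy of `X ⊆ Q^M` with respect to the net `F`:
`limsup_i log|X_{F_i}| / |F_i|`. -/
noncomputable def entropy (R : CellSpace G M) (S : Set G) {I : Type*} [Preorder I]
    (F : I → Set M) (X : Set (M → Q)) : ℝ :=
  limsup (fun i => Real.log ((restr (F i) X).ncard : ℝ) / ((F i).ncard : ℝ)) atTop

/-- `T` is a `⟨θ, κ, θ'⟩`-tiling of `R`. -/
def IsTiling (R : CellSpace G M) (S : Set G) (θ κ θ' : ℕ) (T : Set M) : Prop :=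
  (∀ t ∈ T, ∀ t' ∈ T, t ≠ t' →
    ∀ a ∈ R.ball S t θ, ∀ b ∈ R.ball S t' θ, κ + 1 ≤ R.dist S a b) ∧
  ∀ m : M, ∃ t ∈ T, m ∈ R.ball S t θ'

/-- The action `h ⊛ c` of `h ∈ G` on configurations: `(h ⊛ c)(m) = c(h⁻¹ ▷ m)`. -/
def shiftAct (R : CellSpace G M) (h : G) (c : M → Q) : M → Q :=
  fun m => c (R.act h⁻¹ m)


section Aux

variable (R : CellSpace G M)

lemma aux_act_inv (g : G) (m : M) : R.act g⁻¹ (R.act g m) = m := by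
  rw [← R.mul_act, inv_mul_cancel, R.one_act]

lemma aux_act_inv' (g : G) (m : M) : R.act g (R.act g⁻¹ m) = m := by
  rw [← R.mul_act, mul_inv_cancel, R.one_act]

lemma aux_coord_inv (m : M) : R.act (R.coord m)⁻¹ m = R.m0 := by
  have h := aux_act_inv R (R.coord m) R.m0
  rwa [R.coord_act] at h

lemma aux_sAct_step {S : Set G} (hS : R.IsRightGenSet S) (a : M) {s : G} (hs : s ∈ S) :
    ∃ s' ∈ S, R.sAct (R.sAct a s) s' = a := by
  set b := R.sAct a s with hb
  have hg0 : R.stab ((R.coord b)⁻¹ * (R.coord a * s)) := by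
    show R.act _ R.m0 = R.m0
    rw [R.mul_act]
    have : R.act (R.coord a * s) R.m0 = b := rfl
    rw [this]
    exact aux_coord_inv R b
  refine ⟨(R.coord b)⁻¹ * (R.coord a * s) * s⁻¹, hS.stab_mul _ hg0 s⁻¹ (hS.symm s hs), ?_⟩
  show R.act (R.coord b * ((R.coord b)⁻¹ * (R.coord a * s) * s⁻¹)) R.m0 = a
  have : R.coord b * ((R.coord b)⁻¹ * (R.coord a * s) * s⁻¹) = R.coord a := by group
  rw [this, R.coord_act]

lemma aux_sAct_act {S : Set G} (hS : R.IsRightGenSet S) (g : G) (a : M) {s : G} (hs : s ∈ S) :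
    ∃ s' ∈ S, R.sAct (R.act g a) s' = R.act g (R.sAct a s) := by
  set b := R.act g a with hb
  have hg0 : R.stab ((R.coord b)⁻¹ * (g * R.coord a)) := by
    show R.act _ R.m0 = R.m0
    rw [R.mul_act, R.mul_act, R.coord_act]
    exact aux_coord_inv R b
  refine ⟨(R.coord b)⁻¹ * (g * R.coord a) * s, hS.stab_mul _ hg0 s hs, ?_⟩
  show R.act (R.coord b * ((R.coord b)⁻¹ * (g * R.coord a) * s)) R.m0 = _
  have : R.coord b * ((R.coord b)⁻¹ * (g * R.coord a) * s) = g * (R.coord a * s) := by group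
  rw [this, R.mul_act]
  rfl

lemma aux_chain_act {S : Set G} (hS : R.IsRightGenSet S) (g : G) {m m' : M} {n : ℕ}
    (h : R.Chain S m m' n) : R.Chain S (R.act g m) (R.act g m') n := by
  obtain ⟨f, h0, hn, hstep⟩ := h
  refine ⟨fun i => R.act g (f i), by simp only [h0], by simp only [hn], fun i hi => ?_⟩
  obtain ⟨s, hs, heq⟩ := hstep i hi
  obtain ⟨s', hs', heq'⟩ := aux_sAct_act R hS g (f i) hs
  refine ⟨s', hs', ?_⟩
  show R.act g (f (i + 1)) = R.sAct (R.act g (f i)) s'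
  rw [heq]
  exact heq'.symm

lemma aux_dist_act {S : Set G} (hS : R.IsRightGenSet S) (g : G) (m m' : M) :
    R.dist S (R.act g m) (R.act g m') = R.dist S m m' := by
  unfold CellSpace.dist
  congr 1
  ext n
  constructor
  · intro h
    have := aux_chain_act R hS g⁻¹ h
    rwa [aux_act_inv R g m, aux_act_inv R g m'] at this
  · exact aux_chain_act R hS g

lemma aux_chain_symm {S : Set G} (hS : R.IsRightGenSet S) {m m' : M} {n : ℕ}
    (h : R.Chain S m m' n) : R.Chain S m' m n := by
  obtain ⟨f, h0, hn, hstep⟩ := h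
  refine ⟨fun i => f (n - i), by simpa using hn, by simpa using h0, fun i hi => ?_⟩
  obtain ⟨s, hs, heq⟩ := hstep (n - i - 1) (by omega)
  obtain ⟨s', hs', heq'⟩ := aux_sAct_step R hS (f (n - i - 1)) hs
  refine ⟨s', hs', ?_⟩
  show f (n - (i + 1)) = R.sAct (f (n - i)) s'
  have e1 : n - (i + 1) = n - i - 1 := by omega
  have e3 : f (n - i) = R.sAct (f (n - i - 1)) s := by
    rw [← heq]
    congr 1
    omega
  rw [e1, e3]
  exact heq'.symm

lemma aux_dist_symm {S : Set G} (hS : R.IsRightGenSet S) (m m' : M) :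
    R.dist S m m' = R.dist S m' m := by
  unfold CellSpace.dist
  congr 1
  ext n
  exact ⟨fun h => aux_chain_symm R hS h, fun h => aux_chain_symm R hS h⟩

lemma aux_dist_self (S : Set G) (m : M) : R.dist S m m = 0 :=
  Nat.le_zero.mp (Nat.sInf_le ⟨fun _ => m, rfl, rfl, fun i hi => absurd hi (Nat.not_lt_zero i)⟩)

lemma aux_shift_mem {H : Subgroup G} {X : Set (M → Q)} (hX : IsSubshift R H X)
    {h : G} (hh : h ∈ H) {x : M → Q} (hx : x ∈ X) : shiftAct R h x ∈ X := by
  obtain ⟨F0, -, hXeq⟩ := hX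
  rw [hXeq] at hx ⊢
  intro f hf ⟨h', hh', hocc⟩
  refine hx f hf ⟨h⁻¹ * h', mul_mem (inv_mem hh) hh', fun a => ?_⟩
  rw [R.mul_act]
  exact hocc a

lemma aux_allowed_point {H : Subgroup G} {X : Set (M → Q)} (hX : IsSubshift R H X)
    {A : Set M} {p : A → Q} (hp : Allowed R H X p) : ∃ y ∈ X, ∀ a : A, y ↑a = p a := by
  obtain ⟨x, hx, h, hh, hocc⟩ := hp
  refine ⟨shiftAct R h⁻¹ x, aux_shift_mem R hX (inv_mem hh) hx, fun a => ?_⟩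
  show x (R.act h⁻¹⁻¹ ↑a) = p a
  rw [inv_inv]
  exact hocc a

end Aux

theorem stmt6
    [Finite Q] (R : CellSpace G M) (S : Set G) (hS : R.IsRightGenSet S)
    (H : Subgroup G) (hH : ∀ m : M, R.coord m ∈ H)
    (X : Set (M → Q)) (hX : IsSubshift R H X) (ρ : ℕ)
    (hbp : HasBoundedProp R S X ρ) :
    IsStronglyIrr R S H X ρ ∧ IsStep R S H X ρ := by
  classical
  constructor
  · -- strong irreducibility
    intro A B hA hB p p' hp hp' hd
    have hAB : ∀ m : M, m ∈ A → m ∈ B → False := by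
      intro m hmA hmB
      have h1 := hd m hmA m hmB
      rw [aux_dist_self R S m] at h1
      omega
    obtain ⟨yA, hyA, hyAp⟩ := aux_allowed_point R hX hp
    obtain ⟨yB, hyB, hyBp⟩ := aux_allowed_point R hX hp'
    set F : Set M := A ∪ B with hF
    set pp : F → Q := fun m =>
      if h : (m : M) ∈ A then p ⟨m, h⟩ else p' ⟨m, (m.2).resolve_left h⟩ with hpp
    have hcond : ∀ f ∈ F, ∃ x ∈ X, ∀ (m : M) (hm : m ∈ R.ball S f ρ ∩ F),
        pp ⟨m, hm.2⟩ = x m := by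
      rintro f (hfA | hfB)
      · refine ⟨yA, hyA, fun m hm => ?_⟩
        have hmA : m ∈ A := by
          rcases hm.2 with h | h
          · exact h
          · have h1 := hd f hfA m h
            have h2 : R.dist S f m ≤ ρ := hm.1
            omega
        show dite _ _ _ = _
        rw [dif_pos hmA]
        exact (hyAp ⟨m, hmA⟩).symm
      · refine ⟨yB, hyB, fun m hm => ?_⟩
        have hmA : (m : M) ∉ A := by
          intro hmA
          have h1 := hd m hmA f hfB
          have h2 : R.dist S f m ≤ ρ := hm.1
          rw [aux_dist_symm R hS m f] at h1
          omega
        show dite _ _ _ = _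
        rw [dif_neg hmA]
        exact (hyBp ⟨m, (hm.2).resolve_left hmA⟩).symm
    obtain ⟨x, hx, hxr⟩ := hbp F (hA.union hB) pp hcond
    refine ⟨x, hx, ?_, ?_⟩
    · funext a
      have h2 := congrFun hxr ⟨(a : M), Or.inl a.2⟩
      simp only [Set.restrict, Set.domRestrict_apply] at h2 ⊢
      rw [h2]
      show dite _ _ _ = _
      rw [dif_pos a.2]
    · funext b
      have h2 := congrFun hxr ⟨(b : M), Or.inr b.2⟩
      simp only [Set.restrict, Set.domRestrict_apply] at h2 ⊢
      rw [h2]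
      show dite _ _ _ = _
      rw [dif_neg (fun h => hAB b h b.2)]
  · -- ρ-step
    refine ⟨Sigma.mk (R.ball S R.m0 ρ) '' {q | ¬ Allowed R H X q}, ?_, ?_⟩
    · rintro f ⟨q, hq, rfl⟩
      rfl
    · apply Set.Subset.antisymm
      · rintro x hx f ⟨q, hq, rfl⟩ hocc
        exact hq ⟨x, hx, hocc⟩
      · intro c hc
        obtain ⟨F0, hF0fin, hXeq⟩ := hX
        rw [hXeq]
        rintro f0 hf0 ⟨h, hh, hocc⟩
        set F : Set M := R.act h '' f0.1 with hFdef
        have hFfin : F.Finite := (hF0fin f0 hf0).image _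
        have hcond : ∀ f ∈ F, ∃ x ∈ X, ∀ (m : M) (hm : m ∈ R.ball S f ρ ∩ F),
            F.restrict c ⟨m, hm.2⟩ = x m := by
          intro f hf
          set q : Set.Elem (R.ball S R.m0 ρ) → Q :=
            fun n => c (R.act (R.coord f) (n : M)) with hqdef
          have hqall : Allowed R H X q := by
            by_contra hqn
            exact hc ⟨R.ball S R.m0 ρ, q⟩ ⟨q, hqn, rfl⟩ ⟨R.coord f, hH f, fun a => rfl⟩
          obtain ⟨y, hy, hyq⟩ := aux_allowed_point R ⟨F0, hF0fin, hXeq⟩ hqall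
          refine ⟨shiftAct R (R.coord f) y,
            aux_shift_mem R ⟨F0, hF0fin, hXeq⟩ (hH f) hy, fun m hm => ?_⟩
          have hn : R.act (R.coord f)⁻¹ m ∈ R.ball S R.m0 ρ := by
            have h3 := aux_dist_act R hS (R.coord f)⁻¹ f m
            rw [aux_coord_inv R f] at h3
            show R.dist S R.m0 _ ≤ ρ
            rw [h3]
            exact hm.1
          show c m = y (R.act (R.coord f)⁻¹ m)
          rw [hyq ⟨R.act (R.coord f)⁻¹ m, hn⟩]
          show c m = c (R.act (R.coord f) (R.act (R.coord f)⁻¹ m))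
          rw [aux_act_inv' R]
        obtain ⟨x, hx, hxr⟩ := hbp F hFfin (F.restrict c) hcond
        have hso : SemiOccurs R H f0.2 x := by
            refine ⟨h, hh, fun a => ?_⟩
            have hmem : R.act h (a : M) ∈ F := ⟨a, a.2, rfl⟩
            have h2 := congrFun hxr ⟨R.act h (a : M), hmem⟩
            simp only [Set.restrict, Set.domRestrict_apply] at h2
            rw [h2]
            exact hocc a
        rw [hXeq] at hx
        exact hx f0 hf0 hso


end GoE
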